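/- Let X ⊆ ℝⁿ be a closed set and F : ℝⁿ → ℝᵐ a linear map. If ker F ∩ (C∞X ∩ Sⁿ⁻¹) = ∅, then F(X) is closed in ℝᵐ. -/

import Mathlib

open Filter Topology

noncomputable section

/-- The tangent cone at infinity (asymptotic cone) of a set `X ⊆ ℝⁿ`. -/
def coneAtInfty {n : ℕ} (X : Set (EuclideanSpace ℝ (Fin n))) :
    Set (EuclideanSpace ℝ (Fin n)) :=
  {v | ∃ (x : ℕ → EuclideanSpace ℝ (Fin n)) (t : ℕ → ℝ),
    (∀ k, x k ∈ X) ∧ (∀ k, 0 < t k) ∧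
    Tendsto (fun k => ‖x k‖) atTop atTop ∧
    Tendsto (fun k => t k • x k) atTop (𝓝 v)}

theorem closed_image_of_ker_disjoint {n m : ℕ} (X : Set (EuclideanSpace ℝ (Fin n)))
    (hX : IsClosed X)
    (F : EuclideanSpace ℝ (Fin n) →ₗ[ℝ] EuclideanSpace ℝ (Fin m))
    (hker : (LinearMap.ker F : Set (EuclideanSpace ℝ (Fin n))) ∩
      (coneAtInfty X ∩ Metric.sphere 0 1) = ∅) :
    IsClosed (F '' X) := by
  set Fc : EuclideanSpace ℝ (Fin n) →L[ℝ] EuclideanSpace ℝ (Fin m) :=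
    LinearMap.toContinuousLinearMap F with hFc
  have hFcF : ∀ z, Fc z = F z := fun z => rfl
  rw [← isSeqClosed_iff_isClosed]
  intro u y hu hy
  choose x hxX hxF using hu
  by_cases hb : Tendsto (fun k => ‖x k‖) atTop atTop
  · exfalso
    obtain ⟨N, hN⟩ := eventually_atTop.mp (hb.eventually_ge_atTop 1)
    set w : ℕ → EuclideanSpace ℝ (Fin n) := fun j => (‖x (N + j)‖)⁻¹ • x (N + j) with hw
    have hnorm1 : ∀ j, 1 ≤ ‖x (N + j)‖ := fun j => hN _ (Nat.le_add_right _ _)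
    have hwS : ∀ j, w j ∈ Metric.sphere (0 : EuclideanSpace ℝ (Fin n)) 1 := by
      intro j
      have h0 : ‖x (N + j)‖ ≠ 0 := by linarith [hnorm1 j]
      simp only [hw, Metric.mem_sphere, dist_zero_right, norm_smul, norm_inv, norm_norm]
      field_simp
    obtain ⟨v, hvS, φ, hφ, hφlim⟩ :=
      (isCompact_sphere (0 : EuclideanSpace ℝ (Fin n)) 1).tendsto_subseq hwS
    have hψ : Tendsto (fun j => N + φ j) atTop atTop :=
      tendsto_atTop_mono (fun j => (hφ.id_le j).trans (Nat.le_add_left _ _)) tendsto_id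
    have hnormψ : Tendsto (fun j => ‖x (N + φ j)‖) atTop atTop := hb.comp hψ
    have htpos : ∀ j, 0 < (‖x (N + φ j)‖)⁻¹ := fun j => by
      have := hnorm1 (φ j); positivity
    have hvcone : v ∈ coneAtInfty X := by
      refine ⟨fun j => x (N + φ j), fun j => (‖x (N + φ j)‖)⁻¹, fun j => hxX _, htpos,
        hnormψ, hφlim⟩
    have htzero : Tendsto (fun j => (‖x (N + φ j)‖)⁻¹) atTop (𝓝 0) :=
      tendsto_inv_atTop_zero.comp hnormψ
    have hyψ : Tendsto (fun j => u (N + φ j)) atTop (𝓝 y) := hy.comp hψ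
    have hsm : Tendsto (fun j => (‖x (N + φ j)‖)⁻¹ • u (N + φ j)) atTop
        (𝓝 ((0 : ℝ) • y)) := htzero.smul hyψ
    have hFv : Tendsto (fun j => Fc (w (φ j))) atTop (𝓝 (Fc v)) :=
      (Fc.continuous.tendsto v).comp hφlim
    have heq : (fun j => Fc (w (φ j))) = fun j => (‖x (N + φ j)‖)⁻¹ • u (N + φ j) := by
      funext j
      simp only [hw, map_smul]
      rw [hFcF, hxF]
    have hFv0 : Fc v = 0 := by
      rw [heq] at hFv
      have := tendsto_nhds_unique hFv hsm
      simpa using this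
    have : v ∈ (LinearMap.ker F : Set (EuclideanSpace ℝ (Fin n))) ∩
        (coneAtInfty X ∩ Metric.sphere 0 1) := by
      refine ⟨?_, hvcone, hvS⟩
      simp only [SetLike.mem_coe, LinearMap.mem_ker]
      rw [← hFcF, hFv0]
    rw [hker] at this
    exact this
  · obtain ⟨C, hC⟩ : ∃ C, ∃ᶠ k in atTop, ‖x k‖ ≤ C := by
      by_contra h
      push_neg at h
      apply hb
      rw [tendsto_atTop]
      intro b
      have := h b
      filter_upwards [this] with k hk
      exact hk.le
    obtain ⟨φ, hφ, hφC⟩ := Filter.extraction_of_frequently_atTop hC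
    have hball : ∀ j, x (φ j) ∈ Metric.closedBall (0 : EuclideanSpace ℝ (Fin n)) C := by
      intro j
      simpa [Metric.mem_closedBall, dist_zero_right] using hφC j
    obtain ⟨a, _, ψ, hψ, hψlim⟩ :=
      (isCompact_closedBall (0 : EuclideanSpace ℝ (Fin n)) C).tendsto_subseq hball
    have haX : a ∈ X := hX.isSeqClosed (fun j => hxX (φ (ψ j))) hψlim
    have hcomp : Tendsto (fun j => φ (ψ j)) atTop atTop :=
      (hφ.comp hψ).tendsto_atTop
    have h1 : Tendsto (fun j => u (φ (ψ j))) atTop (𝓝 y) := hy.comp hcomp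
    have h2 : Tendsto (fun j => Fc (x (φ (ψ j)))) atTop (𝓝 (Fc a)) :=
      (Fc.continuous.tendsto a).comp hψlim
    have heq : (fun j => Fc (x (φ (ψ j)))) = fun j => u (φ (ψ j)) := by
      funext j; rw [hFcF, hxF]
    rw [heq] at h2
    have : y = F a := by rw [← hFcF]; exact tendsto_nhds_unique h1 h2
    exact ⟨a, haX, this.symm⟩
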